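/- Let s = (s_n) be an increasing positive weight. If lim_n s_n/n = 0, then m(s) ⊆ c₀ and the inclusion is continuous; if inf_n s_n/n > 0, then m(s) = ℓ∞ with equivalent norms. -/

import Mathlib

open Finset Filter

def marcSet (s : ℕ → ℝ) (f : ℕ → ℝ) : Set ℝ :=
  {r : ℝ | ∃ A : Finset ℕ, A.Nonempty ∧ r = (∑ j ∈ A, |f j|) / s A.card}

noncomputable def marcNorm (s : ℕ → ℝ) (f : ℕ → ℝ) : ℝ := sSup (marcSet s f)

def MemMarc (s : ℕ → ℝ) (f : ℕ → ℝ) : Prop := BddAbove (marcSet s f)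

/-- Let `s` be an increasing positive weight.  If `s n / n → 0` then `m(s) ⊆ c₀`
continuously; if `inf_n s n / n > 0` then `m(s) = ℓ∞` with equivalent norms. -/
theorem marcinkiewicz_c0_or_linfty (s : ℕ → ℝ)
    (hpos : ∀ n, 1 ≤ n → 0 < s n) (hmono : Monotone s) :
    -- if `s n / n → 0`, then `m(s) ⊆ c₀` and the inclusion is continuous
    (Tendsto (fun n : ℕ => s n / n) atTop (nhds 0) →
      (∀ f, MemMarc s f → Tendsto f atTop (nhds 0)) ∧
      ∃ K : ℝ, 0 < K ∧ ∀ f, MemMarc s f → ∀ j, |f j| ≤ K * marcNorm s f) ∧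
    -- if `inf_n s n / n > 0`, then `m(s) = ℓ∞` with equivalent norms
    ((∃ c : ℝ, 0 < c ∧ ∀ n, 1 ≤ n → c ≤ s n / n) →
      (∀ f, MemMarc s f ↔ BddAbove (Set.range fun j => |f j|)) ∧
      ∃ c C : ℝ, 0 < c ∧ ∀ f, MemMarc s f →
        c * (⨆ j, |f j|) ≤ marcNorm s f ∧ marcNorm s f ≤ C * (⨆ j, |f j|)) := by
  have hs1 : 0 < s 1 := hpos 1 le_rfl
  have hsingle : ∀ f : ℕ → ℝ, ∀ j, |f j| / s 1 ∈ marcSet s f := by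
    intro f j
    exact ⟨{j}, Finset.singleton_nonempty j, by simp⟩
  have habs : ∀ f, MemMarc s f → ∀ j, |f j| ≤ s 1 * marcNorm s f := by
    intro f hf j
    have h := le_csSup hf (hsingle f j)
    rw [div_le_iff₀ hs1] at h
    simp only [marcNorm]
    linarith
  have hnonneg : ∀ f, MemMarc s f → 0 ≤ marcNorm s f := by
    intro f hf
    have h := le_csSup hf (hsingle f 0)
    have h0 : 0 ≤ |f 0| / s 1 := div_nonneg (abs_nonneg _) hs1.le
    simp only [marcNorm]
    linarith
  constructor
  · intro hlim
    refine ⟨?_, s 1, hs1, habs⟩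
    intro f hf
    rw [NormedAddCommGroup.tendsto_nhds_zero]
    intro ε hε
    rw [← Nat.cofinite_eq_atTop, eventually_cofinite]
    by_contra hinf
    have hinf' : Set.Infinite {x | ¬ ‖f x‖ < ε} := hinf
    set M := marcNorm s f with hM
    have hM0 : 0 ≤ M := hnonneg f hf
    have hε' : 0 < ε / (M + 1) := by positivity
    have hev : ∀ᶠ n : ℕ in atTop, s n / n < ε / (M + 1) :=
      hlim.eventually (gt_mem_nhds hε')
    obtain ⟨N, hN⟩ := eventually_atTop.mp hev
    set n := max N 1 with hn
    have hn1 : 1 ≤ n := le_max_right N 1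
    have hsn : 0 < s n := hpos n hn1
    have hlt : s n / n < ε / (M + 1) := hN n (le_max_left N 1)
    obtain ⟨A, hAsub, hAcard⟩ := hinf'.exists_subset_card_eq n
    have hAne : A.Nonempty := Finset.card_pos.mp (by omega)
    have hmem : (∑ j ∈ A, |f j|) / s A.card ∈ marcSet s f := ⟨A, hAne, rfl⟩
    have hle : (∑ j ∈ A, |f j|) / s A.card ≤ M := le_csSup hf hmem
    have hsum : (n : ℝ) * ε ≤ ∑ j ∈ A, |f j| := by
      have := Finset.card_nsmul_le_sum A (fun j => |f j|) ε (fun x hx => by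
        have := hAsub hx
        simp only [Set.mem_setOf_eq, Real.norm_eq_abs, not_lt] at this
        exact this)
      rwa [hAcard, nsmul_eq_mul] at this
    rw [hAcard] at hle
    rw [div_le_iff₀ hsn] at hle
    have hnpos : (0 : ℝ) < n := by exact_mod_cast hn1
    rw [div_lt_div_iff₀ hnpos (by positivity : (0:ℝ) < M + 1)] at hlt
    nlinarith [hsn, hsum, hle, hlt]
  · rintro ⟨c, hc, hcs⟩
    have hcard : ∀ A : Finset ℕ, A.Nonempty → c * A.card ≤ s A.card := by
      intro A hA
      have h1 : 1 ≤ A.card := Finset.card_pos.mpr hA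
      have := hcs A.card h1
      have hpos' : (0 : ℝ) < A.card := by exact_mod_cast h1
      rw [le_div_iff₀ hpos'] at this
      linarith
    have hbddOf : ∀ f B, (∀ j, |f j| ≤ B) → ∀ r ∈ marcSet s f, r ≤ B / c := by
      rintro f B hB r ⟨A, hA, rfl⟩
      have h1 : 1 ≤ A.card := Finset.card_pos.mpr hA
      have hsA : 0 < s A.card := hpos _ h1
      have hB0 : 0 ≤ B := le_trans (abs_nonneg _) (hB 0)
      have hsum : ∑ j ∈ A, |f j| ≤ (A.card : ℝ) * B := by
        have := Finset.sum_le_card_nsmul A (fun j => |f j|) B (fun x _ => hB x)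
        rwa [nsmul_eq_mul] at this
      rw [div_le_div_iff₀ hsA hc]
      nlinarith [hcard A hA, mul_le_mul_of_nonneg_right hsum hc.le,
        mul_le_mul_of_nonneg_left (hcard A hA) hB0]
    constructor
    · intro f
      constructor
      · intro hf
        exact ⟨s 1 * marcNorm s f, by rintro x ⟨j, rfl⟩; exact habs f hf j⟩
      · rintro ⟨B, hB⟩
        have hB' : ∀ j, |f j| ≤ B := fun j => hB ⟨j, rfl⟩
        exact ⟨B / c, fun r hr => hbddOf f B hB' r hr⟩
    · refine ⟨(s 1)⁻¹, c⁻¹, inv_pos.mpr hs1, ?_⟩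
      intro f hf
      have hbdd : BddAbove (Set.range fun j => |f j|) :=
        ⟨s 1 * marcNorm s f, by rintro x ⟨j, rfl⟩; exact habs f hf j⟩
      have hsup0 : 0 ≤ ⨆ j, |f j| := Real.iSup_nonneg fun j => abs_nonneg _
      constructor
      · rw [inv_mul_le_iff₀ hs1]
        exact ciSup_le fun j => habs f hf j
      · apply Real.sSup_le
        · rintro r ⟨A, hA, rfl⟩
          have h1 : 1 ≤ A.card := Finset.card_pos.mpr hA
          have hsA : 0 < s A.card := hpos _ h1
          have hsum : ∑ j ∈ A, |f j| ≤ (A.card : ℝ) * (⨆ j, |f j|) := by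
            have := Finset.sum_le_card_nsmul A (fun j => |f j|) (⨆ j, |f j|)
              (fun x _ => le_ciSup hbdd x)
            rwa [nsmul_eq_mul] at this
          rw [show c⁻¹ * (⨆ j, |f j|) = (⨆ j, |f j|) / c by ring,
            div_le_div_iff₀ hsA hc]
          nlinarith [mul_le_mul_of_nonneg_right hsum hc.le,
            mul_le_mul_of_nonneg_left (hcard A hA) hsup0]
        · positivity
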